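/- arXiv:1804.00080 — 2 statements merged into one kernel-verified Lean document; each statement's English description precedes it below -/
import Mathlib

section
/- Let n ≥ 1, let M be an additive subgroup of ℝⁿ that is dense in ℝⁿ and contains u = (1,1,…,1), and set M⁺ = { g ∈ M : every coordinate of g is strictly positive } ∪ {0}. Let φ : M → ℝ be an additive map with φ(g) ≥ 0 for all g ∈ M⁺ and φ(u) = 1. If (hᵢ) is a sequence in M that is Cauchy with respect to the Euclidean norm of ℝⁿ, then (φ(hᵢ)) is a Cauchy sequence of real numbers. -/
/-- The positive cone of an additive subgroup `M` of `ℝⁿ`: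
elements of `M` all of whose coordinates are strictly positive, together with `0`. -/
def Mplus (n : ℕ) (M : AddSubgroup (EuclideanSpace ℝ (Fin n))) :
    Set (EuclideanSpace ℝ (Fin n)) :=
  {g | g ∈ M ∧ ∀ i, 0 < g i} ∪ {0}

lemma coord_abs_le_norm {n : ℕ} (v : EuclideanSpace ℝ (Fin n)) (i : Fin n) :
    |v i| ≤ ‖v‖ := by
  rw [EuclideanSpace.norm_eq]
  have h1 : |v i| = Real.sqrt (‖v i‖ ^ 2) := by
    rw [Real.sqrt_sq_eq_abs]; simp [abs_abs]
  rw [h1]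
  apply Real.sqrt_le_sqrt
  exact Finset.single_le_sum (f := fun j => ‖v j‖ ^ 2)
    (fun j _ => sq_nonneg _) (Finset.mem_univ i)

theorem stmt16 (n : ℕ) (hn : 1 ≤ n) (M : AddSubgroup (EuclideanSpace ℝ (Fin n)))
    (hdense : Dense (M : Set (EuclideanSpace ℝ (Fin n))))
    (hu : (WithLp.toLp 2 (fun _ => (1 : ℝ)) : EuclideanSpace ℝ (Fin n)) ∈ M)
    (φ : M →+ ℝ)
    (hpos : ∀ v : M, (v : EuclideanSpace ℝ (Fin n)) ∈ Mplus n M → 0 ≤ φ v)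
    (hunit : φ ⟨WithLp.toLp 2 (fun _ => (1 : ℝ)), hu⟩ = 1)
    (h : ℕ → M) (hcauchy : CauchySeq (fun i => (h i : EuclideanSpace ℝ (Fin n)))) :
    CauchySeq (fun i => φ (h i)) := by
  set u : M := ⟨WithLp.toLp 2 (fun _ => (1 : ℝ)), hu⟩ with hu_def
  -- key bound: if ‖v‖ < 1/k then |φ v| ≤ 1/k
  have key : ∀ (k : ℕ), 0 < k → ∀ v : M,
      ‖(v : EuclideanSpace ℝ (Fin n))‖ < 1 / k → |φ v| ≤ 1 / k := by
    intro k hk v hv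
    have hcoe : ((k • v : M) : EuclideanSpace ℝ (Fin n))
        = (k : ℝ) • (v : EuclideanSpace ℝ (Fin n)) := by
      push_cast
      rw [Nat.cast_smul_eq_nsmul]
    have hcoord : ∀ i, |((k • v : M) : EuclideanSpace ℝ (Fin n)) i| < 1 := by
      intro i
      have hnorm : ‖((k • v : M) : EuclideanSpace ℝ (Fin n))‖ < 1 := by
        rw [hcoe, norm_smul]
        simp only [Real.norm_natCast]
        calc (k : ℝ) * ‖(v : EuclideanSpace ℝ (Fin n))‖
            < k * (1 / k) := by
              apply mul_lt_mul_of_pos_left hv (by exact_mod_cast hk)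
          _ = 1 := by field_simp
      exact lt_of_le_of_lt (coord_abs_le_norm _ i) hnorm
    have h1 : 0 ≤ φ (u - k • v) := by
      apply hpos
      left
      refine ⟨(u - k • v).2, fun i => ?_⟩
      have habs := abs_lt.mp (hcoord i)
      have hval : ((u - k • v : M) : EuclideanSpace ℝ (Fin n)) i
          = 1 - ((k • v : M) : EuclideanSpace ℝ (Fin n)) i := by
        simp [hu_def]
      rw [hval]
      linarith [habs.2]
    have h2 : 0 ≤ φ (u + k • v) := by
      apply hpos
      left
      refine ⟨(u + k • v).2, fun i => ?_⟩
      have habs := abs_lt.mp (hcoord i)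
      have hval : ((u + k • v : M) : EuclideanSpace ℝ (Fin n)) i
          = 1 + ((k • v : M) : EuclideanSpace ℝ (Fin n)) i := by
        simp [hu_def]
      rw [hval]
      linarith [habs.1]
    rw [map_sub, map_nsmul, hunit] at h1
    rw [map_add, map_nsmul, hunit] at h2
    rw [nsmul_eq_mul] at h1 h2
    have hkR : (0:ℝ) < k := by exact_mod_cast hk
    have hkk : (k:ℝ) * (1/k) = 1 := by field_simp
    rw [abs_le]
    constructor <;> nlinarith
  rw [Metric.cauchySeq_iff] at hcauchy ⊢
  intro ε hε
  obtain ⟨k, hk⟩ := exists_nat_gt (1 / ε)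
  have hk0 : 0 < k := by
    by_contra hc
    push_neg at hc
    interval_cases k
    simp at hk
    linarith [one_div_pos.mpr hε]
  have hkε : 1 / (k : ℝ) < ε := by
    rw [div_lt_iff₀ (by exact_mod_cast hk0)]
    rw [div_lt_iff₀ hε] at hk
    linarith
  obtain ⟨N, hN⟩ := hcauchy (1 / k) (by positivity)
  refine ⟨N, fun i hi j hj => ?_⟩
  have := hN i hi j hj
  rw [dist_eq_norm] at this ⊢
  have hsub : ‖((h i - h j : M) : EuclideanSpace ℝ (Fin n))‖ < 1 / k := by
    simpa using this
  calc |φ (h i) - φ (h j)| = |φ (h i - h j)| := by rw [map_sub]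
    _ ≤ 1 / k := key k hk0 _ hsub
    _ < ε := hkε
end

section
/- Let n ≥ 1, let M be an additive subgroup of ℝⁿ that is dense in ℝⁿ and contains u = (1,1,…,1), and set M⁺ = { g ∈ M : every coordinate of g is strictly positive } ∪ {0}. Fix k ∈ {1,…,n} and let φₖ : M → ℝ be the k-th coordinate functional, φₖ(x) = xₖ. If φ : M → ℝ is an additive map with 0 ≤ φ(g) ≤ φₖ(g) for all g ∈ M⁺, then there exists a real number r with 0 ≤ r ≤ 1 such that φ(x) = r·xₖ for all x ∈ M. In particular, the coordinate functionals φ₁, …, φₙ are exactly the extreme points of the set of states on (M, M⁺, u). -/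
/-- The states on `(M, M⁺, u)` where `u = (1,…,1)`: additive maps `M → ℝ` that are
nonnegative on `M⁺` and send `u` to `1`. -/
def states (n : ℕ) (M : AddSubgroup (EuclideanSpace ℝ (Fin n)))
    (hu : ((WithLp.toLp 2 (fun _ => (1 : ℝ)) : EuclideanSpace ℝ (Fin n))) ∈ M) : Set (M →+ ℝ) :=
  {ψ | (∀ v : M, (v : EuclideanSpace ℝ (Fin n)) ∈ Mplus n M → 0 ≤ ψ v) ∧
    ψ ⟨(WithLp.toLp 2 (fun _ => (1 : ℝ))), hu⟩ = 1}

open Finset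

namespace Stmt17Aux

abbrev E (n : ℕ) := EuclideanSpace ℝ (Fin n)

variable {n : ℕ} {M : AddSubgroup (E n)}

lemma abs_coord_le_norm (x : E n) (i : Fin n) : |x i| ≤ ‖x‖ := by
  rw [EuclideanSpace.norm_eq]
  have h : ‖x i‖ ^ 2 ≤ ∑ j, ‖x j‖ ^ 2 :=
    Finset.single_le_sum (f := fun j => ‖x j‖ ^ 2) (fun j _ => sq_nonneg _) (Finset.mem_univ i)
  have h2 := Real.sqrt_le_sqrt h
  rwa [Real.sqrt_sq (norm_nonneg _), Real.norm_eq_abs] at h2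

lemma norm_le_of_coords {x : E n} {a : ℝ} (ha : 0 ≤ a) (h : ∀ i, |x i| ≤ a) :
    ‖x‖ ≤ Real.sqrt n * a := by
  rw [EuclideanSpace.norm_eq]
  have h1 : ∑ j, ‖x j‖ ^ 2 ≤ ∑ _j : Fin n, a ^ 2 := by
    apply Finset.sum_le_sum
    intro j _
    rw [Real.norm_eq_abs]
    exact pow_le_pow_left₀ (abs_nonneg _) (h j) 2
  have h2 := Real.sqrt_le_sqrt h1
  calc Real.sqrt (∑ j, ‖x j‖ ^ 2) ≤ Real.sqrt (∑ _j : Fin n, a ^ 2) := h2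
    _ = Real.sqrt (n * a ^ 2) := by rw [Finset.sum_const, Finset.card_univ, Fintype.card_fin,
          nsmul_eq_mul]
    _ = Real.sqrt n * a := by
        rw [Real.sqrt_mul (Nat.cast_nonneg n), Real.sqrt_sq ha]

variable {M : AddSubgroup (E n)}

/-- Density approximation: an element of `M` strictly above `v` coordinatewise,
within `ε` of each coordinate. -/
lemma approx (hdense : Dense (M : Set (E n))) (v : E n) {ε : ℝ} (hε : 0 < ε) :
    ∃ g : M, ∀ i, v i < (g : E n) i ∧ (g : E n) i < v i + ε := by
  have hvu : ∃ w : E n, ∀ i, w i = v i + ε / 2 := ⟨(WithLp.toLp 2 (fun i => v i + ε / 2) : E n), fun _ => rfl⟩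
  obtain ⟨y, hy⟩ := hvu
  obtain ⟨g, hgM, hgd⟩ := hdense.exists_dist_lt y (by positivity : (0:ℝ) < ε / 4)
  refine ⟨⟨g, hgM⟩, fun i => ?_⟩
  have hyi : y i = v i + ε / 2 := hy i
  have hgi : |g i - y i| ≤ dist y g := by
    rw [dist_comm, ← sub_eq_zero] at *
    have := abs_coord_le_norm (g - y) i
    simpa [dist_eq_norm] using abs_coord_le_norm (g - y) i
  have h2 : |g i - y i| < ε / 4 := lt_of_le_of_lt hgi hgd
  rw [abs_lt] at h2
  constructor
  · simp only [AddSubgroup.coe_mk]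
    nlinarith [h2.1, h2.2]
  · simp only [AddSubgroup.coe_mk]
    nlinarith [h2.1, h2.2]

section Dominated

/-- key upper bound -/
lemma le_max_coord (hdense : Dense (M : Set (E n))) (k : Fin n) (φ : M →+ ℝ)
    (hφ : ∀ v : M, (v : E n) ∈ Mplus n M → 0 ≤ φ v ∧ φ v ≤ (v : E n) k)
    (v : M) : φ v ≤ max ((v : E n) k) 0 := by
  apply le_of_forall_pos_le_add
  intro ε hε
  obtain ⟨g, hg⟩ := approx hdense (WithLp.toLp 2 (fun i => max ((v : E n) i) 0)) (half_pos hε)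
  have hgpos : ∀ i, 0 < (g : E n) i := fun i =>
    lt_of_le_of_lt (le_max_right _ _) (hg i).1
  have hgMp : (g : E n) ∈ Mplus n M := Or.inl ⟨g.2, hgpos⟩
  have hgv : ((g - v : M) : E n) ∈ Mplus n M := by
    refine Or.inl ⟨(g - v).2, fun i => ?_⟩
    have h1 : (v : E n) i ≤ max ((v : E n) i) 0 := le_max_left _ _
    have h2 := (hg i).1
    have : ((g - v : M) : E n) i = (g : E n) i - (v : E n) i := by
      simp
    rw [this]; linarith
  have h3 : 0 ≤ φ (g - v) := (hφ _ hgv).1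
  have h4 : φ (g - v) = φ g - φ v := by rw [map_sub]
  have h5 : φ g ≤ (g : E n) k := (hφ _ hgMp).2
  have h6 : (g : E n) k < max ((v : E n) k) 0 + ε / 2 := (hg k).2
  linarith

/-- the representation for a coordinate-dominated additive map -/
lemma dominated_repr (hdense : Dense (M : Set (E n)))
    (hu : ((WithLp.toLp 2 (fun _ => (1 : ℝ)) : E n)) ∈ M) (k : Fin n) (φ : M →+ ℝ)
    (hφ : ∀ v : M, (v : E n) ∈ Mplus n M → 0 ≤ φ v ∧ φ v ≤ (v : E n) k) :
    0 ≤ φ ⟨(WithLp.toLp 2 (fun _ => (1 : ℝ))), hu⟩ ∧ φ ⟨(WithLp.toLp 2 (fun _ => (1 : ℝ))), hu⟩ ≤ 1 ∧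
      ∀ x : M, φ x = φ ⟨(WithLp.toLp 2 (fun _ => (1 : ℝ))), hu⟩ * (x : E n) k := by
  set uM : M := ⟨(WithLp.toLp 2 (fun _ => (1 : ℝ))), hu⟩ with huM
  have huMp : (uM : E n) ∈ Mplus n M := Or.inl ⟨hu, fun i => one_pos⟩
  have hr := hφ uM huMp
  have huk : (uM : E n) k = 1 := rfl
  set r : ℝ := φ uM with hrdef
  have hr0 : 0 ≤ r := hr.1
  have hr1 : r ≤ 1 := by rw [hrdef]; rw [huk] at hr; exact hr.2
  refine ⟨hr0, hr1, fun x => ?_⟩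
  -- key inequalities from rationals
  have key : ∀ (q : ℚ), ((x : E n) k < q → φ x ≤ q * r) ∧ ((q : ℝ) < (x : E n) k → q * r ≤ φ x) := by
    intro q
    constructor
    · intro hq
      set w : M := (q.den : ℤ) • x - q.num • uM with hw
      have hwk : (w : E n) k = (q.den : ℝ) * (x : E n) k - (q.num : ℝ) := by
        simp [hw, huk]
      have hwkneg : (w : E n) k < 0 := by
        rw [hwk]
        have hden : (0:ℝ) < (q.den : ℝ) := by exact_mod_cast q.pos
        have : (q : ℝ) = (q.num : ℝ) / (q.den : ℝ) := by
          exact_mod_cast (Rat.num_div_den q).symm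
        rw [this, lt_div_iff₀ hden] at hq
        nlinarith
      have hble := le_max_coord hdense k φ hφ w
      rw [max_eq_right (le_of_lt hwkneg)] at hble
      have hwφ : φ w = (q.den : ℝ) * φ x - (q.num : ℝ) * r := by
        simp [hw, map_zsmul, map_sub]
        try ring
        exact Or.inl hrdef.symm
      have hden : (0:ℝ) < (q.den : ℝ) := by exact_mod_cast q.pos
      have hqr : (q : ℝ) = (q.num : ℝ) / (q.den : ℝ) := by
        exact_mod_cast (Rat.num_div_den q).symm
      rw [hwφ] at hble
      rw [hqr, div_mul_eq_mul_div, le_div_iff₀ hden]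
      linarith
    · intro hq
      set w : M := (q.den : ℤ) • x - q.num • uM with hw
      have hwk : (w : E n) k = (q.den : ℝ) * (x : E n) k - (q.num : ℝ) := by
        simp [hw, huk]
      have hwkpos : 0 < (w : E n) k := by
        rw [hwk]
        have hden : (0:ℝ) < (q.den : ℝ) := by exact_mod_cast q.pos
        have hqr : (q : ℝ) = (q.num : ℝ) / (q.den : ℝ) := by
          exact_mod_cast (Rat.num_div_den q).symm
        rw [hqr, div_lt_iff₀ hden] at hq
        nlinarith
      have hble := le_max_coord hdense k φ hφ (-w)
      have hwneg : ((-w : M) : E n) k = -((w : E n) k) := by simp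
      rw [hwneg, max_eq_right (by linarith)] at hble
      rw [map_neg] at hble
      have hwφ : φ w = (q.den : ℝ) * φ x - (q.num : ℝ) * r := by
        simp [hw, map_zsmul, map_sub]
        try ring
        exact Or.inl hrdef.symm
      have hden : (0:ℝ) < (q.den : ℝ) := by exact_mod_cast q.pos
      have hqr : (q : ℝ) = (q.num : ℝ) / (q.den : ℝ) := by
        exact_mod_cast (Rat.num_div_den q).symm
      rw [hwφ] at hble
      rw [hqr, div_mul_eq_mul_div, div_le_iff₀ hden]
      linarith
  have hle : φ x ≤ r * (x : E n) k := by
    apply le_of_forall_pos_le_add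
    intro ε hε
    obtain ⟨q, hq1, hq2⟩ := exists_rat_btwn (lt_add_of_pos_right ((x : E n) k) hε)
    have h1 := (key q).1 hq1
    have h2 : (q : ℝ) * r ≤ ((x : E n) k + ε) * r := by
      apply mul_le_mul_of_nonneg_right (le_of_lt hq2) hr0
    nlinarith
  have hge : r * (x : E n) k ≤ φ x := by
    apply le_of_forall_pos_le_add
    intro ε hε
    obtain ⟨q, hq1, hq2⟩ := exists_rat_btwn (sub_lt_self ((x : E n) k) hε)
    have h1 := (key q).2 hq2
    have h2 : ((x : E n) k - ε) * r ≤ (q : ℝ) * r := by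
      apply mul_le_mul_of_nonneg_right (le_of_lt hq1) hr0
    nlinarith
  linarith

end Dominated

section States

/-- A state is bounded above by any coordinatewise upper bound. -/
lemma state_le (hu : ((WithLp.toLp 2 (fun _ => (1 : ℝ)) : E n)) ∈ M) (ψ : M →+ ℝ)
    (hpos : ∀ v : M, (v : E n) ∈ Mplus n M → 0 ≤ ψ v)
    (hone : ψ ⟨(WithLp.toLp 2 (fun _ => (1 : ℝ))), hu⟩ = 1)
    (v : M) (c : ℝ) (hc : ∀ i, (v : E n) i ≤ c) : ψ v ≤ c := by
  apply le_of_forall_pos_le_add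
  intro ε hε
  obtain ⟨q, hq1, hq2⟩ := exists_rat_btwn (lt_add_of_pos_right c hε)
  set uM : M := ⟨(WithLp.toLp 2 (fun _ => (1 : ℝ))), hu⟩ with huM
  set w : M := q.num • uM - (q.den : ℤ) • v with hw
  have hden : (0:ℝ) < (q.den : ℝ) := by exact_mod_cast q.pos
  have hqr : (q : ℝ) = (q.num : ℝ) / (q.den : ℝ) := by
    exact_mod_cast (Rat.num_div_den q).symm
  have hwMp : (w : E n) ∈ Mplus n M := by
    refine Or.inl ⟨w.2, fun i => ?_⟩
    have h1 : (w : E n) i = (q.num : ℝ) - (q.den : ℝ) * (v : E n) i := by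
      simp [hw, huM]
    rw [h1]
    have h2 : (v : E n) i ≤ c := hc i
    rw [hqr, lt_div_iff₀ hden] at hq1
    nlinarith
  have h0 := hpos w hwMp
  have hwψ : ψ w = (q.num : ℝ) - (q.den : ℝ) * ψ v := by
    simp [hw, map_zsmul, map_sub, hone]
    try ring
  rw [hwψ] at h0
  have : ψ v ≤ (q : ℝ) := by
    rw [hqr, le_div_iff₀ hden]
    nlinarith
  linarith

/-- A state is 1-Lipschitz. -/
lemma state_lip (hu : ((WithLp.toLp 2 (fun _ => (1 : ℝ)) : E n)) ∈ M) (ψ : M →+ ℝ)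
    (hpos : ∀ v : M, (v : E n) ∈ Mplus n M → 0 ≤ ψ v)
    (hone : ψ ⟨(WithLp.toLp 2 (fun _ => (1 : ℝ))), hu⟩ = 1)
    (v : M) : |ψ v| ≤ ‖(v : E n)‖ := by
  rw [abs_le]
  constructor
  · have := state_le hu ψ hpos hone (-v) ‖(v : E n)‖ (fun i => ?_)
    · rw [map_neg] at this; linarith
    · have h1 := abs_coord_le_norm (v : E n) i
      have h2 : ((-v : M) : E n) i = -((v : E n) i) := by simp
      rw [h2]
      rw [abs_le] at h1
      linarith
  · apply state_le hu ψ hpos hone v _ (fun i => ?_)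
    have h1 := abs_coord_le_norm (v : E n) i
    rw [abs_le] at h1
    exact h1.2

/-- Every state is given by a convex combination of coordinates. -/
lemma state_repr (hdense : Dense (M : Set (E n))) (hu : ((WithLp.toLp 2 (fun _ => (1 : ℝ)) : E n)) ∈ M)
    (ψ : M →+ ℝ)
    (hpos : ∀ v : M, (v : E n) ∈ Mplus n M → 0 ≤ ψ v)
    (hone : ψ ⟨(WithLp.toLp 2 (fun _ => (1 : ℝ))), hu⟩ = 1) :
    ∃ r : Fin n → ℝ, (∀ j, 0 ≤ r j) ∧ (∑ j, r j) = 1 ∧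
      ∀ x : M, ψ x = ∑ j, r j * (x : E n) j := by
  classical
  set f : E n → ℝ := fun x => if h : x ∈ M then ψ ⟨x, h⟩ else 0 with hf
  have hfM : ∀ (x : E n) (hx : x ∈ M), f x = ψ ⟨x, hx⟩ := fun x hx => by
    simp [hf, dif_pos hx]
  have hfl : LipschitzOnWith 1 f (M : Set (E n)) := by
    apply LipschitzOnWith.of_dist_le_mul
    intro x hx y hy
    rw [hfM x hx, hfM y hy, Real.dist_eq, NNReal.coe_one, one_mul, dist_eq_norm]
    have h1 : ψ ⟨x, hx⟩ - ψ ⟨y, hy⟩ = ψ (⟨x, hx⟩ - ⟨y, hy⟩) := (map_sub ψ _ _).symm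
    rw [h1]
    have h2 := state_lip hu ψ hpos hone (⟨x, hx⟩ - ⟨y, hy⟩)
    simpa using h2
  obtain ⟨Ψ, hΨl, hEq⟩ := hfl.extend_real
  have hΨM : ∀ x : M, Ψ (x : E n) = ψ x := fun x => by
    have h := hEq x.2
    rw [← h, hfM _ x.2]
  have hadd : ∀ a b : E n, Ψ (a + b) = Ψ a + Ψ b := by
    have hD : Dense ((M : Set (E n)) ×ˢ (M : Set (E n))) := hdense.prod hdense
    have hc1 : Continuous (fun p : E n × E n => Ψ (p.1 + p.2)) :=
      hΨl.continuous.comp (continuous_fst.add continuous_snd)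
    have hc2 : Continuous (fun p : E n × E n => Ψ p.1 + Ψ p.2) :=
      (hΨl.continuous.comp continuous_fst).add (hΨl.continuous.comp continuous_snd)
    have heq : (fun p : E n × E n => Ψ (p.1 + p.2)) = fun p => Ψ p.1 + Ψ p.2 := by
      apply Continuous.ext_on hD hc1 hc2
      rintro ⟨a, b⟩ ⟨ha, hb⟩
      have hab : a + b ∈ M := M.add_mem ha hb
      show Ψ (a + b) = Ψ a + Ψ b
      have h3 : (⟨a + b, hab⟩ : M) = ⟨a, ha⟩ + ⟨b, hb⟩ := rfl
      rw [hΨM ⟨a, ha⟩, hΨM ⟨b, hb⟩, show a + b = ((⟨a + b, hab⟩ : M) : E n) from rfl,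
        hΨM, h3, map_add]
    intro a b
    exact congrFun heq (a, b)
  set Ψhom : E n →+ ℝ := AddMonoidHom.mk' Ψ (fun a b => hadd a b) with hΨhom
  have hΨc : Continuous Ψhom := hΨl.continuous
  set L := Ψhom.toRealLinearMap hΨc with hL
  have hLΨ : ∀ x : E n, L x = Ψ x := fun x => rfl
  set r : Fin n → ℝ := fun j => Ψ (EuclideanSpace.single j (1:ℝ)) with hr
  have hdecomp : ∀ x : E n, Ψ x = ∑ j, x j * r j := by
    intro x
    have hx : x = ∑ j, x j • EuclideanSpace.single j (1:ℝ) := by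
      ext i
      rw [WithLp.ofLp_sum, Finset.sum_apply]
      simp [EuclideanSpace.single_apply]
    calc Ψ x = L x := (hLΨ x).symm
      _ = L (∑ j, x j • EuclideanSpace.single j (1:ℝ)) := by rw [← hx]
      _ = ∑ j, x j • L (EuclideanSpace.single j (1:ℝ)) := by
          rw [map_sum]
          exact Finset.sum_congr rfl fun j _ => by rw [map_smul]
      _ = ∑ j, x j * r j := by
          exact Finset.sum_congr rfl fun j _ => by rw [hLΨ]; rfl
  have hr0 : ∀ j, 0 ≤ r j := by
    intro j
    have key : ∀ ε : ℝ, 0 < ε → -ε ≤ r j := by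
      intro ε hε
      have hs : (0:ℝ) < Real.sqrt n + 1 := by positivity
      set δ : ℝ := ε / (Real.sqrt n + 1) with hδ
      have hδ0 : 0 < δ := by positivity
      obtain ⟨g, hg⟩ := approx hdense (EuclideanSpace.single j (1:ℝ)) hδ0
      have hgpos : ∀ i, 0 < (g : E n) i := fun i => by
        have h1 : (0:ℝ) ≤ EuclideanSpace.single j (1:ℝ) i := by
          rw [EuclideanSpace.single_apply]
          split <;> norm_num
        exact lt_of_le_of_lt h1 (hg i).1
      have hgMp : (g : E n) ∈ Mplus n M := Or.inl ⟨g.2, hgpos⟩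
      have hψg : 0 ≤ ψ g := hpos g hgMp
      have hdist : dist (EuclideanSpace.single j (1:ℝ)) ((g : E n)) ≤ ε := by
        rw [dist_eq_norm]
        have h4 : ∀ i, |(EuclideanSpace.single j (1:ℝ) - (g : E n)) i| ≤ δ := by
          intro i
          have h5 : (EuclideanSpace.single j (1:ℝ) - (g : E n)) i
              = EuclideanSpace.single j (1:ℝ) i - (g : E n) i := rfl
          rw [h5, abs_le]
          constructor
          · have := (hg i).2; linarith
          · have := (hg i).1; linarith
        calc ‖EuclideanSpace.single j (1:ℝ) - (g : E n)‖ ≤ Real.sqrt n * δ :=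
              norm_le_of_coords (le_of_lt hδ0) h4
          _ ≤ (Real.sqrt n + 1) * δ := by nlinarith [Real.sqrt_nonneg (n:ℝ)]
          _ = ε := by rw [hδ]; field_simp
      have hlip : |Ψ (EuclideanSpace.single j (1:ℝ)) - Ψ ((g : E n))| ≤ ε := by
        have h9 := hΨl.dist_le_mul (EuclideanSpace.single j (1:ℝ)) ((g : E n))
        rw [Real.dist_eq, NNReal.coe_one, one_mul] at h9
        linarith
      rw [abs_le] at hlip
      have h6 : Ψ ((g : E n)) = ψ g := hΨM g
      have : -ε ≤ Ψ (EuclideanSpace.single j (1:ℝ)) := by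
        rw [h6] at hlip
        linarith [hlip.2]
      exact this
    refine le_of_forall_pos_le_add (fun ε hε => by linarith [key ε hε])
  refine ⟨r, hr0, ?_, ?_⟩
  · have h10 : Ψ ((WithLp.toLp 2 (fun _ => (1 : ℝ)) : E n)) = 1 := by
      have := hΨM ⟨(WithLp.toLp 2 (fun _ => (1 : ℝ))), hu⟩
      rw [hone] at this
      exact this
    have h11 := hdecomp ((WithLp.toLp 2 (fun _ => (1 : ℝ)) : E n))
    rw [h10] at h11
    have h12 : ∑ j, ((WithLp.toLp 2 (fun _ => (1 : ℝ)) : E n)) j * r j = ∑ j, r j := by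
      exact Finset.sum_congr rfl fun j _ => one_mul _
    rw [h12] at h11
    exact h11.symm
  · intro x
    rw [← hΨM x, hdecomp]
    exact Finset.sum_congr rfl fun j _ => mul_comm _ _

end States

/-- The `j`-th coordinate functional on `M`. -/
noncomputable def coordHom (M : AddSubgroup (E n)) (j : Fin n) : M →+ ℝ :=
  AddMonoidHom.mk' (fun x => (x : E n) j) (fun a b => rfl)

@[simp] lemma coordHom_apply (j : Fin n) (x : M) : coordHom M j x = (x : E n) j := rfl

lemma coord_nonneg_on_Mplus (j : Fin n) (v : M) (hv : (v : E n) ∈ Mplus n M) :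
    0 ≤ (v : E n) j := by
  rcases hv with ⟨_, hp⟩ | hz
  · exact le_of_lt (hp j)
  · have : (v : E n) = 0 := hz
    rw [this]
    rfl

lemma coordHom_mem_states (hu : ((WithLp.toLp 2 (fun _ => (1 : ℝ)) : E n)) ∈ M) (j : Fin n) :
    coordHom M j ∈ states n M hu := by
  constructor
  · intro v hv
    exact coord_nonneg_on_Mplus j v hv
  · rfl

theorem main (n : ℕ) (hn : 1 ≤ n) (M : AddSubgroup (EuclideanSpace ℝ (Fin n)))
    (hdense : Dense (M : Set (EuclideanSpace ℝ (Fin n))))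
    (hu : ((WithLp.toLp 2 (fun _ => (1 : ℝ)) : EuclideanSpace ℝ (Fin n))) ∈ M)
    (k : Fin n) (φ : M →+ ℝ)
    (hφ : ∀ v : M, (v : EuclideanSpace ℝ (Fin n)) ∈ Mplus n M →
      0 ≤ φ v ∧ φ v ≤ (v : EuclideanSpace ℝ (Fin n)) k) :
    (∃ r : ℝ, 0 ≤ r ∧ r ≤ 1 ∧
      ∀ x : M, φ x = r * (x : EuclideanSpace ℝ (Fin n)) k) ∧
    Set.extremePoints ℝ (states n M hu) =
      {ψ : M →+ ℝ | ∃ j : Fin n, ∀ x : M, ψ x = (x : EuclideanSpace ℝ (Fin n)) j} := by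
  classical
  constructor
  · obtain ⟨h0, h1, hrep⟩ := dominated_repr hdense hu k φ hφ
    exact ⟨_, h0, h1, hrep⟩
  · ext ψ
    simp only [Set.mem_setOf_eq]
    constructor
    · -- extreme point → coordinate functional
      rintro ⟨hmem, hext⟩
      obtain ⟨hpos, hone⟩ := hmem
      obtain ⟨r, hr0, hrsum, hrep⟩ := state_repr hdense hu ψ hpos hone
      have hex : ∃ j, 0 < r j := by
        by_contra hcon
        push_neg at hcon
        have : ∑ j, r j = 0 :=
          Finset.sum_eq_zero fun j _ => le_antisymm (hcon j) (hr0 j)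
        rw [hrsum] at this
        norm_num at this
      obtain ⟨j, hj⟩ := hex
      have herase : r j + ∑ i ∈ univ.erase j, r i = ∑ i, r i :=
        Finset.add_sum_erase univ r (mem_univ j)
      have hrj1 : r j ≤ 1 := by
        have h2 : 0 ≤ ∑ i ∈ univ.erase j, r i :=
          Finset.sum_nonneg fun i _ => hr0 i
        linarith [herase, hrsum.symm ▸ herase]
      rcases eq_or_lt_of_le hrj1 with heq | hlt
      · -- r j = 1, the rest vanish
        refine ⟨j, fun x => ?_⟩
        have hz : ∑ i ∈ univ.erase j, r i = 0 := by
          rw [hrsum] at herase; linarith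
        have hzz : ∀ i ∈ univ.erase j, r i = 0 :=
          (Finset.sum_eq_zero_iff_of_nonneg fun i _ => hr0 i).1 hz
        rw [hrep x, ← Finset.add_sum_erase univ _ (mem_univ j), heq, one_mul]
        have : ∑ i ∈ univ.erase j, r i * (x : E n) i = 0 :=
          Finset.sum_eq_zero fun i hi => by rw [hzz i hi, zero_mul]
        rw [this, add_zero]
      · -- 0 < r j < 1 : write ψ as proper combination and use extremality
        set c : ℝ := 1 - r j with hc
        have hcpos : 0 < c := by linarith
        have hcs : ∑ i ∈ univ.erase j, r i = c := by
          rw [hrsum] at herase; linarith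
        set χ : M →+ ℝ := AddMonoidHom.mk'
          (fun x => c⁻¹ * ∑ i ∈ univ.erase j, r i * (x : E n) i)
          (by
            intro a b
            have hco : ∀ i, ((a + b : M) : E n) i = (a : E n) i + (b : E n) i :=
              fun i => rfl
            simp only [hco, mul_add, Finset.sum_add_distrib]
            try ring) with hχ
        have hχstate : χ ∈ states n M hu := by
          constructor
          · intro v hv
            have : 0 ≤ ∑ i ∈ univ.erase j, r i * (v : E n) i :=
              Finset.sum_nonneg fun i _ =>
                mul_nonneg (hr0 i) (coord_nonneg_on_Mplus i v hv)
            have hci : 0 ≤ c⁻¹ := le_of_lt (inv_pos.2 hcpos)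
            exact mul_nonneg hci this
          · show c⁻¹ * ∑ i ∈ univ.erase j, r i * ((⟨(WithLp.toLp 2 (fun _ => (1 : ℝ))), hu⟩ : M) : E n) i = 1
            have : ∀ i, ((⟨(WithLp.toLp 2 (fun _ => (1 : ℝ))), hu⟩ : M) : E n) i = 1 := fun i => rfl
            simp only [this, mul_one, hcs]
            all_goals exact inv_mul_cancel₀ (ne_of_gt hcpos)
        have hseg : ψ ∈ openSegment ℝ (coordHom M j) χ := by
          refine ⟨r j, c, hj, hcpos, by rw [hc]; ring, ?_⟩
          ext x
          have h1 : (r j • coordHom M j + c • χ) x = r j * (x : E n) j +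
              c * (c⁻¹ * ∑ i ∈ univ.erase j, r i * (x : E n) i) := by
            simp [hχ]
          rw [h1, ← mul_assoc, mul_inv_cancel₀ (ne_of_gt hcpos), one_mul, hrep x,
            ← Finset.add_sum_erase univ _ (mem_univ j)]
        have h1 := hext (coordHom_mem_states hu j) hχstate hseg
        exact ⟨j, fun x => by rw [← h1]; rfl⟩
    · -- coordinate functional → extreme point
      rintro ⟨j, hj⟩
      have hψ : ψ = coordHom M j := AddMonoidHom.ext fun x => hj x
      subst hψ
      refine ⟨coordHom_mem_states hu j, ?_⟩
      intro ψ₁ h₁ ψ₂ h₂ hseg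
      obtain ⟨a, b, ha, hb, hab, hsum⟩ := hseg
      obtain ⟨h₁pos, h₁one⟩ := h₁
      obtain ⟨h₂pos, h₂one⟩ := h₂
      have heval : ∀ v : M, a * ψ₁ v + b * ψ₂ v = (v : E n) j := by
        intro v
        have := DFunLike.congr_fun hsum v
        simpa using this
      have key : ∀ (c : ℝ) (ρ σ : M →+ ℝ), 0 < c →
          (∀ v : M, (v : E n) ∈ Mplus n M → 0 ≤ ρ v) → ρ ⟨(WithLp.toLp 2 (fun _ => (1 : ℝ))), hu⟩ = 1 →
          (∀ v : M, (v : E n) ∈ Mplus n M → 0 ≤ σ v) →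
          (∀ v : M, c * ρ v + σ v = (v : E n) j) → ρ = coordHom M j := by
        intro c ρ σ hcpos hρpos hρone hσpos hρσ
        set θ : M →+ ℝ := AddMonoidHom.mk' (fun x => c * ρ x)
          (fun x y => by
            show c * ρ (x + y) = c * ρ x + c * ρ y
            rw [map_add]; ring) with hθ
        have hθd : ∀ v : M, (v : E n) ∈ Mplus n M → 0 ≤ θ v ∧ θ v ≤ (v : E n) j := by
          intro v hv
          constructor
          · exact mul_nonneg (le_of_lt hcpos) (hρpos v hv)
          · have h3 := hρσ v
            have h4 := hσpos v hv
            show c * ρ v ≤ (v : E n) j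
            linarith
        obtain ⟨_, _, hrepθ⟩ := dominated_repr hdense hu j θ hθd
        have hθu : θ ⟨(WithLp.toLp 2 (fun _ => (1 : ℝ))), hu⟩ = c := by
          show c * ρ ⟨(WithLp.toLp 2 (fun _ => (1 : ℝ))), hu⟩ = c
          rw [hρone, mul_one]
        ext x
        have h5 := hrepθ x
        rw [hθu] at h5
        have h6 : c * ρ x = c * (x : E n) j := h5
        have h7 := mul_left_cancel₀ (ne_of_gt hcpos) h6
        simpa using h7
      · refine key a ψ₁ (b • ψ₂) ha h₁pos h₁one ?_ ?_
        · intro v hv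
          have : (b • ψ₂) v = b * ψ₂ v := rfl
          rw [this]
          exact mul_nonneg (le_of_lt hb) (h₂pos v hv)
        · intro v
          have : (b • ψ₂) v = b * ψ₂ v := rfl
          rw [this]
          exact heval v

end Stmt17Aux

theorem stmt17 (n : ℕ) (hn : 1 ≤ n) (M : AddSubgroup (EuclideanSpace ℝ (Fin n)))
    (hdense : Dense (M : Set (EuclideanSpace ℝ (Fin n))))
    (hu : ((WithLp.toLp 2 (fun _ => (1 : ℝ)) : EuclideanSpace ℝ (Fin n))) ∈ M)
    (k : Fin n) (φ : M →+ ℝ)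
    (hφ : ∀ v : M, (v : EuclideanSpace ℝ (Fin n)) ∈ Mplus n M →
      0 ≤ φ v ∧ φ v ≤ (v : EuclideanSpace ℝ (Fin n)) k) :
    (∃ r : ℝ, 0 ≤ r ∧ r ≤ 1 ∧
      ∀ x : M, φ x = r * (x : EuclideanSpace ℝ (Fin n)) k) ∧
    Set.extremePoints ℝ (states n M hu) =
      {ψ : M →+ ℝ | ∃ j : Fin n, ∀ x : M, ψ x = (x : EuclideanSpace ℝ (Fin n)) j} :=
  Stmt17Aux.main n hn M hdense hu k φ hφ
end
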